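/- arXiv:1809.04571 — 2 statements merged into one kernel-verified Lean document; each statement's English description precedes it below -/
import Mathlib

section
/- For all integers n ≥ 1 and 0 ≤ k ≤ n, the number of n-derangements with exactly k cycles satisfies the inclusion–exclusion identity d_n^{(k)} = Σ_{j=0}^{k} (−1)^j · C(n,j) · [n−j, k−j], as an identity of integers. -/
/-- The number of cycles in the cycle decomposition of a permutation,
counting fixed points as cycles of length 1. -/
def cycleCount {α : Type*} [Fintype α] [DecidableEq α] (σ : Equiv.Perm α) : ℕ :=
  σ.cycleFactorsFinset.card + (Finset.univ.filter fun x => σ x = x).card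

/-- `dnk n k` is the number of derangements of `n` elements with exactly `k` cycles. -/
def dnk (n k : ℕ) : ℕ :=
  (Finset.univ.filter fun σ : Equiv.Perm (Fin n) =>
    (∀ i, σ i ≠ i) ∧ cycleCount σ = k).card

/-- The unsigned Stirling number of the first kind: the number of permutations of
`n` elements with exactly `k` cycles (counting fixed points as 1-cycles). -/
def stirling1 (n k : ℕ) : ℕ :=
  (Finset.univ.filter fun σ : Equiv.Perm (Fin n) => cycleCount σ = k).card

open Finset Equiv Equiv.Perm

lemma cycleCount_eq {α : Type*} [Fintype α] [DecidableEq α] (σ : Equiv.Perm α) :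
    cycleCount σ = Multiset.card σ.cycleType + (Fintype.card α - σ.cycleType.sum) := by
  unfold cycleCount
  congr 1
  · rw [Equiv.Perm.cycleType_def, Multiset.card_map]
    rfl
  · have h : (Finset.univ.filter fun x => σ x = x) = σ.supportᶜ := by
      ext x
      simp [Equiv.Perm.mem_support]
    rw [h, Finset.card_compl, Equiv.Perm.sum_cycleType]

lemma cycleType_permCongr {α β : Type*} [Fintype α] [DecidableEq α] [Fintype β] [DecidableEq β]
    (g : α ≃ β) (τ : Equiv.Perm α) :
    Equiv.Perm.cycleType (g.permCongr τ) = τ.cycleType := by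
  have hf : g.permCongr τ =
      τ.extendDomain (g.trans (Equiv.subtypeUnivEquiv (fun _ : β => trivial)).symm) := by
    ext b
    rw [Equiv.Perm.extendDomain_apply_subtype _ _ trivial]
    simp [Equiv.subtypeUnivEquiv]
  rw [hf, Equiv.Perm.cycleType_extendDomain]

lemma cycleCount_permCongr {α β : Type*} [Fintype α] [DecidableEq α] [Fintype β] [DecidableEq β]
    (g : α ≃ β) (τ : Equiv.Perm α) :
    cycleCount (g.permCongr τ) = cycleCount τ := by
  rw [cycleCount_eq, cycleCount_eq, cycleType_permCongr, Fintype.card_congr g]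

lemma count_eq_stirling1 {β : Type*} [Fintype β] [DecidableEq β] (k : ℕ) :
    (Finset.univ.filter fun τ : Equiv.Perm β => cycleCount τ = k).card
      = stirling1 (Fintype.card β) k := by
  unfold stirling1
  apply Finset.card_bij (fun τ _ => (Fintype.equivFin β).permCongr τ)
  · intro τ hτ
    simp only [Finset.mem_filter, Finset.mem_univ, true_and] at hτ ⊢
    rw [cycleCount_permCongr]
    exact hτ
  · intro τ₁ _ τ₂ _ h
    exact (Fintype.equivFin β).permCongr.injective h
  · intro σ hσ
    simp only [Finset.mem_filter, Finset.mem_univ, true_and] at hσ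
    refine ⟨(Fintype.equivFin β).symm.permCongr σ, ?_, ?_⟩
    · simp only [Finset.mem_filter, Finset.mem_univ, true_and]
      rw [cycleCount_permCongr]
      exact hσ
    · ext x; simp

lemma cycleCount_ofSubtype {α : Type*} [Fintype α] [DecidableEq α] {p : α → Prop}
    [DecidablePred p] (τ : Equiv.Perm (Subtype p)) :
    cycleCount (Equiv.Perm.ofSubtype τ)
      = cycleCount τ + (Fintype.card α - Fintype.card (Subtype p)) := by
  rw [cycleCount_eq, cycleCount_eq, Equiv.Perm.cycleType_ofSubtype]
  have h1 : τ.cycleType.sum ≤ Fintype.card (Subtype p) := by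
    rw [Equiv.Perm.sum_cycleType]
    exact (Finset.card_le_univ _).trans_eq Finset.card_univ
  have h2 : Fintype.card (Subtype p) ≤ Fintype.card α := Fintype.card_subtype_le _
  omega


lemma cycleCount_subtypePerm_add {α : Type*} [Fintype α] [DecidableEq α] {p : α → Prop}
    [DecidablePred p] (σ : Equiv.Perm α) (h₁ : ∀ x, p x ↔ p (σ x))
    (h₂ : ∀ x, σ x ≠ x → p x) :
    cycleCount (σ.subtypePerm (fun x => (h₁ x).symm)) + (Fintype.card α - Fintype.card (Subtype p))
      = cycleCount σ := by
  have h := cycleCount_ofSubtype (σ.subtypePerm (fun x => (h₁ x).symm))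
  rw [Equiv.Perm.ofSubtype_subtypePerm (fun x => (h₁ x).symm) h₂] at h
  have e : Fintype.card {x // p x} = Fintype.card (Subtype p) :=
    Fintype.card_congr (Equiv.refl _)
  omega

lemma N_eq (n k : ℕ) (S : Finset (Fin n)) :
    (Finset.univ.filter fun σ : Equiv.Perm (Fin n) =>
        (∀ x ∈ S, σ x = x) ∧ cycleCount σ = k).card
      = if S.card ≤ k then stirling1 (n - S.card) (k - S.card) else 0 := by
  classical
  have hcardsub : Fintype.card {x : Fin n // x ∉ S} = n - S.card := by
    rw [Fintype.card_subtype_compl, Fintype.card_coe, Fintype.card_fin]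
  have hSn : S.card ≤ n := by
    simpa [Fintype.card_fin] using Finset.card_le_univ S
  have hmem : ∀ (σ : Equiv.Perm (Fin n)), (∀ x ∈ S, σ x = x) →
      ∀ x : Fin n, (x ∉ S ↔ σ x ∉ S) := by
    intro σ hfix x
    constructor
    · intro hx hσx
      exact hx ((σ.injective (hfix _ hσx)) ▸ hσx)
    · intro hx hxS
      exact hx (by rw [hfix x hxS]; exact hxS)
  have hmov : ∀ (σ : Equiv.Perm (Fin n)), (∀ x ∈ S, σ x = x) →
      ∀ x : Fin n, σ x ≠ x → x ∉ S :=
    fun σ hfix x hne hxS => hne (hfix x hxS)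
  have step1 :
      (Finset.univ.filter fun σ : Equiv.Perm (Fin n) =>
          (∀ x ∈ S, σ x = x) ∧ cycleCount σ = k).card
        = (Finset.univ.filter fun τ : Equiv.Perm {x : Fin n // x ∉ S} =>
            cycleCount τ + S.card = k).card := by
    symm
    apply Finset.card_bij' (fun τ _ => Equiv.Perm.ofSubtype τ)
      (fun σ hσ => σ.subtypePerm (fun x => (hmem σ ((Finset.mem_filter.mp hσ).2).1 x).symm))
    case hi =>
      intro τ hτ
      simp only [Finset.mem_filter, Finset.mem_univ, true_and] at hτ ⊢
      constructor
      · intro x hx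
        exact Equiv.Perm.ofSubtype_apply_of_not_mem τ (not_not.mpr hx)
      · rw [cycleCount_ofSubtype, hcardsub, Fintype.card_fin]
        omega
    case hj =>
      intro σ hσ
      have hσ' := (Finset.mem_filter.mp hσ).2
      obtain ⟨hfix, hcc⟩ := hσ'
      simp only [Finset.mem_filter, Finset.mem_univ, true_and]
      have key := cycleCount_subtypePerm_add σ (hmem σ hfix) (hmov σ hfix)
      rw [hcardsub, Fintype.card_fin] at key
      show cycleCount (σ.subtypePerm (fun x => (hmem σ hfix x).symm)) + S.card = k
      omega
    case left_inv =>
      intro τ _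
      exact Equiv.Perm.subtypePerm_ofSubtype τ
    case right_inv =>
      intro σ hσ
      have hσ' := (Finset.mem_filter.mp hσ).2
      exact Equiv.Perm.ofSubtype_subtypePerm (fun x => (hmem σ hσ'.1 x).symm) (hmov σ hσ'.1)
  rw [step1]
  by_cases hk : S.card ≤ k
  · rw [if_pos hk]
    have heq : (Finset.univ.filter fun τ : Equiv.Perm {x : Fin n // x ∉ S} =>
        cycleCount τ + S.card = k)
        = (Finset.univ.filter fun τ : Equiv.Perm {x : Fin n // x ∉ S} =>
        cycleCount τ = k - S.card) := by
      apply Finset.filter_congr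
      intro τ _
      constructor <;> intro h <;> omega
    rw [heq, count_eq_stirling1, hcardsub]
  · rw [if_neg hk]
    rw [Finset.card_eq_zero, Finset.filter_eq_empty_iff]
    intro τ _
    omega

theorem dnk_inclusion_exclusion (n k : ℕ) (hn : 1 ≤ n) (hk : k ≤ n) :
    (dnk n k : ℤ) =
      ∑ j ∈ Finset.range (k + 1),
        (-1 : ℤ) ^ j * (n.choose j : ℤ) * (stirling1 (n - j) (k - j) : ℤ) := by
  classical
  set T : Finset (Equiv.Perm (Fin n)) :=
    Finset.univ.filter fun σ => cycleCount σ = k with hT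
  set N : Finset (Fin n) → ℕ := fun S =>
    (Finset.univ.filter fun σ : Equiv.Perm (Fin n) =>
      (∀ x ∈ S, σ x = x) ∧ cycleCount σ = k).card with hNdef
  have hN : ∀ S : Finset (Fin n), (N S : ℤ)
      = ∑ σ ∈ T, if ∀ x ∈ S, σ x = x then (1 : ℤ) else 0 := by
    intro S
    have hfe : (Finset.univ.filter fun σ : Equiv.Perm (Fin n) =>
        (∀ x ∈ S, σ x = x) ∧ cycleCount σ = k)
        = T.filter fun σ => ∀ x ∈ S, σ x = x := by
      rw [hT, Finset.filter_filter]
      apply Finset.filter_congr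
      intro σ _
      exact Iff.symm and_comm
    rw [hNdef]
    simp only [hfe, Finset.card_filter]
    push_cast
    rfl
  -- claim 1 : alternating sum over all subsets equals dnk
  have claim1 : ∑ S ∈ (Finset.univ : Finset (Fin n)).powerset,
      (-1 : ℤ) ^ S.card * (N S : ℤ) = (dnk n k : ℤ) := by
    have hswap : ∑ S ∈ (Finset.univ : Finset (Fin n)).powerset,
        (-1 : ℤ) ^ S.card * (N S : ℤ)
        = ∑ σ ∈ T, ∑ S ∈ (Finset.univ : Finset (Fin n)).powerset,
            (-1 : ℤ) ^ S.card * (if ∀ x ∈ S, σ x = x then (1 : ℤ) else 0) := by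
      rw [Finset.sum_comm]
      apply Finset.sum_congr rfl
      intro S _
      rw [hN S, Finset.mul_sum]
    rw [hswap]
    have hinner : ∀ σ ∈ T,
        (∑ S ∈ (Finset.univ : Finset (Fin n)).powerset,
          (-1 : ℤ) ^ S.card * (if ∀ x ∈ S, σ x = x then (1 : ℤ) else 0))
        = (if (Finset.univ.filter fun x => σ x = x) = ∅ then (1 : ℤ) else 0) := by
      intro σ _
      set F : Finset (Fin n) := Finset.univ.filter fun x => σ x = x with hF
      have h1 : ∀ S : Finset (Fin n), (∀ x ∈ S, σ x = x) ↔ S ⊆ F := by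
        intro S
        constructor
        · intro h x hx
          rw [hF, Finset.mem_filter]
          exact ⟨Finset.mem_univ x, h x hx⟩
        · intro h x hx
          exact (Finset.mem_filter.mp (h hx)).2
      calc ∑ S ∈ (Finset.univ : Finset (Fin n)).powerset,
            (-1 : ℤ) ^ S.card * (if ∀ x ∈ S, σ x = x then (1 : ℤ) else 0)
          = ∑ S ∈ (Finset.univ : Finset (Fin n)).powerset,
            (if S ⊆ F then (-1 : ℤ) ^ S.card else 0) := by
            apply Finset.sum_congr rfl
            intro S _
            rw [if_congr (h1 S) rfl rfl, mul_ite, mul_one, mul_zero]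
        _ = ∑ S ∈ ((Finset.univ : Finset (Fin n)).powerset.filter fun S => S ⊆ F),
            (-1 : ℤ) ^ S.card := (Finset.sum_filter _ _).symm
        _ = ∑ S ∈ F.powerset, (-1 : ℤ) ^ S.card := by
            congr 1
            ext S
            simp [Finset.mem_powerset, Finset.subset_univ]
        _ = if F = ∅ then (1 : ℤ) else 0 := Finset.sum_powerset_neg_one_pow_card
    rw [Finset.sum_congr rfl hinner, Finset.sum_boole]
    congr 1
    rw [hT, Finset.filter_filter]
    unfold dnk
    congr 1
    apply Finset.filter_congr
    intro σ _
    constructor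
    · rintro ⟨hcc, hemp⟩
      refine ⟨fun i hi => ?_, hcc⟩
      rw [Finset.filter_eq_empty_iff] at hemp
      exact hemp (Finset.mem_univ i) hi
    · rintro ⟨hder, hcc⟩
      refine ⟨hcc, Finset.filter_eq_empty_iff.mpr fun i _ => hder i⟩
  -- claim 2 : alternating sum over subsets organized by size
  have claim2 : ∑ S ∈ (Finset.univ : Finset (Fin n)).powerset,
      (-1 : ℤ) ^ S.card * (N S : ℤ)
      = ∑ j ∈ Finset.range (n + 1),
          (-1 : ℤ) ^ j * (n.choose j : ℤ) *
            (if j ≤ k then (stirling1 (n - j) (k - j) : ℤ) else 0) := by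
    rw [Finset.sum_powerset]
    have hcu : ((Finset.univ : Finset (Fin n)).card) = n := by
      rw [Finset.card_univ, Fintype.card_fin]
    rw [hcu]
    apply Finset.sum_congr rfl
    intro j hj
    have hconst : ∀ S ∈ Finset.powersetCard j (Finset.univ : Finset (Fin n)),
        (-1 : ℤ) ^ S.card * (N S : ℤ)
        = (-1 : ℤ) ^ j * (if j ≤ k then (stirling1 (n - j) (k - j) : ℤ) else 0) := by
      intro S hS
      have hcard : S.card = j := (Finset.mem_powersetCard.mp hS).2
      rw [hNdef]
      simp only [N_eq n k S, hcard]
      split <;> simp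
    rw [Finset.sum_congr rfl hconst, Finset.sum_const, Finset.card_powersetCard, hcu,
      nsmul_eq_mul]
    ring
  rw [← claim1, claim2,
    ← Finset.sum_subset (Finset.range_subset_range.mpr (show k + 1 ≤ n + 1 by omega))
      (fun j hj hjk => by
        rw [Finset.mem_range] at hj hjk
        rw [if_neg (by omega), mul_zero])]
  apply Finset.sum_congr rfl
  intro j hj
  rw [Finset.mem_range] at hj
  rw [if_pos (by omega)]
end

section
/- For every integer n ≥ 3, the following identity of real numbers holds: ∏_{i=1}^{n−1} (1 − 1/(n − i + (i−1)/(n−1))) = (1/(n−1)) · ∏_{i=1}^{n−1} (1 + 1/((n−2)·(n−i)))^{−1}. -/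
open Finset

lemma sis_key (c : ℝ) (hc : 0 < c) (m : ℕ) :
    ∏ j ∈ Finset.Icc 1 m, (c * j / (c * j + c + 1)) =
      (c + 1) / (c * m + c + 1) * ∏ j ∈ Finset.Icc 1 m, (c * j / (c * j + 1)) := by
  induction m with
  | zero =>
      have : c + 1 ≠ 0 := by linarith
      simp [div_self this]
  | succ m ih =>
      rw [Finset.prod_Icc_succ_top (by omega), Finset.prod_Icc_succ_top (by omega), ih]
      have h1 : (0:ℝ) < c * m + c + 1 := by positivity
      have h2 : (0:ℝ) < c * (m+1) + c + 1 := by positivity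
      have h3 : (0:ℝ) < c * (m+1) + 1 := by positivity
      push_cast
      field_simp

lemma sis_reflect (n : ℕ) (f : ℕ → ℝ) :
    ∏ i ∈ Finset.Icc 1 (n - 1), f i = ∏ i ∈ Finset.Icc 1 (n - 1), f (n - i) := by
  refine Finset.prod_nbij' (fun i => n - i) (fun i => n - i) ?_ ?_ ?_ ?_ ?_ <;>
    intro a ha <;> simp only [Finset.mem_Icc] at ha ⊢ <;>
    first
      | omega
      | (congr 1; omega)

theorem sis_refined_bound_identity (n : ℕ) (hn : 3 ≤ n) :
    ∏ i ∈ Finset.Icc 1 (n - 1),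
        (1 - 1 / ((n : ℝ) - i + ((i : ℝ) - 1) / ((n : ℝ) - 1))) =
      (1 / ((n : ℝ) - 1)) *
        ∏ i ∈ Finset.Icc 1 (n - 1),
          (1 + 1 / (((n : ℝ) - 2) * ((n : ℝ) - i)))⁻¹ := by
  set c : ℝ := (n : ℝ) - 2 with hcdef
  have hc : 0 < c := by
    have : (3:ℝ) ≤ n := by exact_mod_cast hn
    simp [hcdef]; linarith
  rw [sis_reflect n, sis_reflect n (fun i => (1 + 1 / (((n : ℝ) - 2) * ((n : ℝ) - i)))⁻¹)]
  have hL : ∀ i ∈ Finset.Icc 1 (n-1),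
      (1 - 1 / ((n : ℝ) - (↑(n - i) : ℝ) + ((↑(n - i) : ℝ) - 1) / ((n : ℝ) - 1))) =
      c * i / (c * i + c + 1) := by
    intro i hi
    simp only [Finset.mem_Icc] at hi
    have hi1 : 1 ≤ i := hi.1
    have hin : i ≤ n := by omega
    have hcast : (↑(n - i) : ℝ) = (n : ℝ) - i := by push_cast [hin]; ring
    have hi1' : (1:ℝ) ≤ i := by exact_mod_cast hi1
    have hn1 : (0:ℝ) < (n:ℝ) - 1 := by linarith [hc, hcdef ▸ hc]
    have hd : (0:ℝ) < c * i + c + 1 := by positivity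
    have hD : (n : ℝ) - ((n:ℝ) - i) + ((n:ℝ) - i - 1) / ((n : ℝ) - 1)
        = (c * i + c + 1) / (c + 1) := by
      have : (n:ℝ) - 1 = c + 1 := by simp [hcdef]; ring
      rw [this]
      field_simp
      simp [hcdef]; ring
    rw [hcast, hD]
    have hc1 : (0:ℝ) < c + 1 := by linarith
    field_simp
    ring
  have hR : ∀ i ∈ Finset.Icc 1 (n-1),
      (1 + 1 / (((n : ℝ) - 2) * ((n : ℝ) - (↑(n - i) : ℝ))))⁻¹ =
      c * i / (c * i + 1) := by
    intro i hi
    simp only [Finset.mem_Icc] at hi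
    have hin : i ≤ n := by omega
    have hcast : (↑(n - i) : ℝ) = (n : ℝ) - i := by push_cast [hin]; ring
    have hi1' : (1:ℝ) ≤ i := by exact_mod_cast hi.1
    have hci : (0:ℝ) < c * i := by positivity
    rw [hcast, ← hcdef]
    have : (n:ℝ) - ((n:ℝ) - i) = i := by ring
    rw [this]
    rw [inv_eq_one_div]
    field_simp
  rw [Finset.prod_congr rfl hL, Finset.prod_congr rfl hR, sis_key c hc]
  congr 1
  have hm : (↑(n-1) : ℝ) = (n:ℝ) - 1 := by
    have : 1 ≤ n := by omega
    push_cast [this]; ring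
  rw [hm]
  have h1 : c * ((n:ℝ)-1) + c + 1 = ((n:ℝ)-1)^2 := by simp [hcdef]; ring
  rw [h1]
  have hn1 : (0:ℝ) < (n:ℝ)-1 := by
    have : (3:ℝ) ≤ n := by exact_mod_cast hn
    linarith
  have : c + 1 = (n:ℝ) - 1 := by simp [hcdef]; ring
  rw [this]
  field_simp
end
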